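/- Let A be an invertible GFDM matrix with characteristic matrix G having no zero entries, D = KM, and let C = W_D^H·D_C·W_D with invertible diagonal D_C. Set R_e = N₀·(W_D A^{-H})^H·D_C^{-1}D_C^{-H}·(W_D A^{-H}). Then the diagonal entries of R_e satisfy [R_e]_{k+mK,k+mK} is constant in m for each k (i.e., the zero-forcing error variance σ²_{k,m} does not depend on the subsymbol index m). -/

import Mathlib

open Complex Matrix BigOperators Kronecker

noncomputable section

namespace GFDM

/-- Normalized p-point DFT matrix. -/
def W (p : ℕ) : Matrix (Fin p) (Fin p) ℂ := fun m n =>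
  Complex.exp (-2 * Real.pi * Complex.I * (m.val : ℂ) * (n.val : ℂ) / (p : ℂ)) / (Real.sqrt p : ℂ)

/-- Reshape a vector of length K*M into a K×M matrix, (k,m)-entry = g (k + m*K). -/
def reshape (K M : ℕ) (g : Fin (K * M) → ℂ) : Matrix (Fin K) (Fin M) ℂ := fun k m =>
  g ⟨k.val + m.val * K, by
    have hm := m.isLt
    calc k.val + m.val * K < K + m.val * K := by omega
      _ = (m.val + 1) * K := by ring
      _ ≤ M * K := Nat.mul_le_mul_right K hm
      _ = K * M := Nat.mul_comm M K⟩

/-- Column-wise vectorization of a K×M matrix: (vec G) (k + m*K) = G k m. -/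
def vec (K M : ℕ) (G : Matrix (Fin K) (Fin M) ℂ) : Fin (K * M) → ℂ := fun i =>
  G ⟨i.val % K, by
      have h := i.isLt
      rcases Nat.eq_zero_or_pos K with h0 | h0
      · subst h0; simp at h
      · exact Nat.mod_lt _ h0⟩
    ⟨i.val / K, Nat.div_lt_of_lt_mul i.isLt⟩

/-- The characteristic matrix G = √D · reshape(g,K,M) · W_M. -/
def charMatrix (K M : ℕ) (g : Fin (K * M) → ℂ) : Matrix (Fin K) (Fin M) ℂ :=
  (Real.sqrt (K * M) : ℂ) • (reshape K M g * W M)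

/-- Phase-shifted characteristic matrix: Ḡ_{k,m} = G_{k,m} e^{-2πi km/D}. -/
def phaseShift (K M : ℕ) (G : Matrix (Fin K) (Fin M) ℂ) : Matrix (Fin K) (Fin M) ℂ := fun k m =>
  G k m * Complex.exp (-2 * Real.pi * Complex.I * (k.val : ℂ) * (m.val : ℂ) / ((K * M : ℕ) : ℂ))

/-- Index identification (m,k) ↦ k + K·m between Fin M × Fin K and Fin (K*M). -/
def idx (K M : ℕ) : Fin M × Fin K ≃ Fin (K * M) :=
  finProdFinEquiv.trans (finCongr (Nat.mul_comm M K))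

/-- The GFDM matrix (W_M^H ⊗ I_K)·diag(vec G)·(W_M ⊗ W_K^H) built from a characteristic matrix G. -/
def gfdmOfChar (K M : ℕ) (G : Matrix (Fin K) (Fin M) ℂ) :
    Matrix (Fin (K * M)) (Fin (K * M)) ℂ :=
  Matrix.reindex (idx K M) (idx K M)
    (((W M)ᴴ ⊗ₖ (1 : Matrix (Fin K) (Fin K) ℂ)) *
      Matrix.diagonal (fun p : Fin M × Fin K => G p.2 p.1) *
      (W M ⊗ₖ (W K)ᴴ))

/-- The GFDM matrix defined directly by its columns: the (k+mK)-th column has n-th entry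
    g_{⟨n-mK⟩_D} e^{2πi kn/K}. -/
def gfdmMatrix (K M : ℕ) (g : Fin (K * M) → ℂ) : Matrix (Fin (K * M)) (Fin (K * M)) ℂ :=
  fun n c =>
    g ⟨(n.val + K * M - (c.val / K) * K) % (K * M), by
        have h := n.isLt
        rcases Nat.eq_zero_or_pos (K * M) with h0 | h0
        · omega
        · exact Nat.mod_lt _ h0⟩ *
      Complex.exp (2 * Real.pi * Complex.I * ((c.val % K : ℕ) : ℂ) * (n.val : ℂ) / (K : ℂ))

/-- The permutation matrix Π with Π_{kM+m, nK+l} = δ_{kl} δ_{mn}. -/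
def permPi (K M : ℕ) : Matrix (Fin (K * M)) (Fin (K * M)) ℂ := fun i j =>
  if i.val / M = j.val % K ∧ i.val % M = j.val / K then 1 else 0

/-- The index k + m·K as an element of Fin (K*M). -/
def vecIdx {K M : ℕ} (k : Fin K) (m : Fin M) : Fin (K * M) :=
  ⟨k.val + m.val * K, by
    have hm := m.isLt
    calc k.val + m.val * K < K + m.val * K := by omega
      _ = (m.val + 1) * K := by ring
      _ ≤ M * K := Nat.mul_le_mul_right K hm
      _ = K * M := Nat.mul_comm M K⟩

/-- The index k·M + m as an element of Fin (K*M). -/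
def rowIdx {K M : ℕ} (k : Fin K) (m : Fin M) : Fin (K * M) :=
  ⟨k.val * M + m.val, by
    have hk := k.isLt
    calc k.val * M + m.val < k.val * M + M := by omega
      _ = (k.val + 1) * M := by ring
      _ ≤ K * M := Nat.mul_le_mul_right M hk⟩


lemma key_sum (p : ℕ) (hp : 0 < p) (m n : Fin p) :
    ∑ j : Fin p, Complex.exp (2 * Real.pi * Complex.I * (((n:ℕ):ℂ) - ((m:ℕ):ℂ)) * ((j:ℕ):ℂ) / p)
      = if m = n then (p : ℂ) else 0 := by
  have hpc : (p : ℂ) ≠ 0 := Nat.cast_ne_zero.mpr hp.ne'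
  set ζ := Complex.exp (2 * Real.pi * Complex.I * (((n:ℕ):ℂ) - ((m:ℕ):ℂ)) / p) with hζ
  have hz : ∀ j : ℕ, Complex.exp (2 * Real.pi * Complex.I * (((n:ℕ):ℂ) - ((m:ℕ):ℂ)) * (j:ℂ) / p) = ζ ^ j := by
    intro j
    rw [hζ, ← Complex.exp_nat_mul]
    ring_nf
  rcases eq_or_ne m n with h | h
  · subst h
    simp
  · rw [if_neg h]
    have hζp : ζ ^ p = 1 := by
      rw [hζ, ← Complex.exp_nat_mul]
      have : (p:ℂ) * (2 * Real.pi * Complex.I * (((n:ℕ):ℂ) - ((m:ℕ):ℂ)) / p) = (((n:ℤ) - (m:ℤ) : ℤ):ℂ) * (2 * Real.pi * Complex.I) := by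
        push_cast
        field_simp
      rw [this, Complex.exp_int_mul_two_pi_mul_I]
    have hζ1 : ζ ≠ 1 := by
      intro h1
      obtain ⟨k, hk⟩ := Complex.exp_eq_one_iff.mp (hζ ▸ h1)
      have h2πI : (2*(Real.pi:ℂ)*Complex.I) ≠ 0 := by
        simp [Real.pi_ne_zero, Complex.I_ne_zero]
      have h2 : (((n:ℕ):ℂ) - ((m:ℕ):ℂ)) = (k:ℂ) * p := by
        field_simp at hk
        apply mul_left_cancel₀ h2πI
        linear_combination (2*(Real.pi:ℂ)*Complex.I) * hk
      have h4 : ((n:ℕ):ℤ) - ((m:ℕ):ℤ) = k * p := by exact_mod_cast h2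
      have hdvd : (p:ℤ) ∣ ((n:ℕ):ℤ) - ((m:ℕ):ℤ) := ⟨k, by rw [h4]; ring⟩
      have habs : |((n:ℕ):ℤ) - ((m:ℕ):ℤ)| < (p:ℤ) :=
        abs_lt.mpr ⟨by have := m.isLt; have := n.isLt; omega,
          by have := m.isLt; have := n.isLt; omega⟩
      have h5 := Int.eq_zero_of_abs_lt_dvd hdvd habs
      exact h (Fin.ext (by omega))
    calc ∑ j : Fin p, Complex.exp (2 * Real.pi * Complex.I * (((n:ℕ):ℂ) - ((m:ℕ):ℂ)) * ((j:ℕ):ℂ) / p)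
        = ∑ j ∈ Finset.range p, ζ ^ j := by
          rw [← Fin.sum_univ_eq_sum_range (fun j => ζ ^ j) p]
          exact Finset.sum_congr rfl fun j _ => hz j
      _ = (ζ ^ p - 1)/(ζ - 1) := geom_sum_eq hζ1 p
      _ = 0 := by rw [hζp]; simp

lemma W_mul_Wh (p : ℕ) (hp : 0 < p) : W p * (W p)ᴴ = 1 := by
  have hpc : (p:ℂ) ≠ 0 := Nat.cast_ne_zero.mpr hp.ne'
  have hs : (Real.sqrt p : ℂ) * (Real.sqrt p : ℂ) = (p:ℂ) := by
    rw [← Complex.ofReal_mul, Real.mul_self_sqrt (Nat.cast_nonneg p)]; norm_cast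
  ext m n
  rw [Matrix.mul_apply, Matrix.one_apply]
  have step : ∀ j : Fin p, W p m j * (W p)ᴴ j n
      = Complex.exp (2 * Real.pi * Complex.I * (((n:ℕ):ℂ) - ((m:ℕ):ℂ)) * ((j:ℕ):ℂ) / p) / p := by
    intro j
    simp only [Matrix.conjTranspose_apply, W, RCLike.star_def]
    rw [map_div₀, Complex.conj_ofReal, ← Complex.exp_conj]
    rw [div_mul_div_comm, ← Complex.exp_add, hs]
    congr 1
    simp only [map_div₀, _root_.map_mul, map_neg, map_ofNat, Complex.conj_I, Complex.conj_ofReal,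
      Complex.conj_natCast]
    ring
  rw [show (∑ j, W p m j * (W p)ᴴ j n)
      = (∑ j : Fin p, Complex.exp (2 * Real.pi * Complex.I * (((n:ℕ):ℂ) - ((m:ℕ):ℂ)) * ((j:ℕ):ℂ) / p)) / p from by
    rw [Finset.sum_div]; exact Finset.sum_congr rfl fun j _ => step j]
  rw [key_sum p hp m n]
  split_ifs with h <;> simp [hpc]

lemma Wh_mul_W (p : ℕ) (hp : 0 < p) : (W p)ᴴ * W p = 1 :=
  mul_eq_one_comm.mp (W_mul_Wh p hp)

lemma idx_val (K M : ℕ) (m : Fin M) (k : Fin K) : (idx K M (m,k)).val = k.val + K * m.val := rfl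

lemma idx_eq_vecIdx {K M : ℕ} (k : Fin K) (m : Fin M) : idx K M (m,k) = vecIdx k m :=
  Fin.ext (by simp [idx_val, vecIdx]; ring)

lemma gfdm_apply (K M : ℕ) (H : Matrix (Fin K) (Fin M) ℂ) (m₁ : Fin M) (k₁ : Fin K)
    (m₂ : Fin M) (k₂ : Fin K) :
    gfdmOfChar K M H (idx K M (m₁,k₁)) (idx K M (m₂,k₂)) =
      (starRingEnd ℂ) (W K k₂ k₁) *
        ∑ mt : Fin M, (starRingEnd ℂ) (W M mt m₁) * H k₁ mt * W M mt m₂ := by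
  unfold gfdmOfChar
  rw [Matrix.reindex_apply, Matrix.submatrix_apply, Equiv.symm_apply_apply, Equiv.symm_apply_apply]
  simp only [Matrix.mul_apply, Matrix.diagonal_apply, Matrix.kroneckerMap_apply,
    Matrix.one_apply, Prod.mk.injEq, Matrix.conjTranspose_apply, Fintype.sum_prod_type,
    RCLike.star_def, mul_ite, ite_mul, mul_zero, zero_mul, mul_one, one_mul, ite_and,
    Finset.sum_ite_eq, Finset.sum_ite_eq', Finset.mem_univ, if_true]
  rw [Finset.mul_sum]
  exact Finset.sum_congr rfl fun mt _ => by ring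

lemma col_phase (K M : ℕ) (hK : 0 < K) (hM : 0 < M) (H : Matrix (Fin K) (Fin M) ℂ)
    (l : Fin (K*M)) (k : Fin K) (m : Fin M) :
    (W (K*M) * gfdmOfChar K M H) l (vecIdx k m)
      = Complex.exp (-2 * Real.pi * Complex.I * (l.val : ℂ) * (m.val : ℂ) / (M:ℂ)) *
        (W (K*M) * gfdmOfChar K M H) l (vecIdx k ⟨0, hM⟩) := by
  haveI : NeZero M := ⟨hM.ne'⟩
  have hMc : (M:ℂ) ≠ 0 := Nat.cast_ne_zero.mpr hM.ne'
  have hKc : (K:ℂ) ≠ 0 := Nat.cast_ne_zero.mpr hK.ne'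
  rw [Matrix.mul_apply, Matrix.mul_apply]
  have hsum : ∀ (F : Fin (K*M) → ℂ), ∑ j, F j = ∑ p : Fin M × Fin K, F (idx K M p) :=
    fun F => (Fintype.sum_equiv (idx K M) _ F (fun p => rfl)).symm
  rw [hsum, hsum, Finset.mul_sum]
  refine (Fintype.sum_equiv (Equiv.prodCongr (Equiv.addRight m) (Equiv.refl (Fin K))) _ _ ?_).symm
  rintro ⟨m₁, k₁⟩
  simp only [Equiv.prodCongr_apply, Equiv.coe_addRight, Equiv.refl_apply, Prod.map]
  rw [← idx_eq_vecIdx k m, ← idx_eq_vecIdx k ⟨0, hM⟩, gfdm_apply, gfdm_apply]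
  set t : ℕ := (m₁.val + m.val) / M with ht
  have h3 : (((m₁ + m : Fin M)).val : ℂ) + M*t = (m₁.val:ℂ) + m.val := by
    have h1 : (m₁ + m : Fin M).val = (m₁.val + m.val) % M := Fin.val_add m₁ m
    have h2 : (m₁ + m : Fin M).val + M * t = m₁.val + m.val := by
      rw [h1, ht]; exact Nat.mod_add_div _ _
    exact_mod_cast congrArg (Nat.cast : ℕ → ℂ) h2
  have hv : (((m₁ + m : Fin M)).val : ℂ) = (m₁.val:ℂ) + m.val - M * t :=
    eq_sub_of_add_eq h3
  have h1 : W (K*M) l (idx K M (m₁ + m, k₁))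
      = Complex.exp (-2 * Real.pi * Complex.I * (l.val : ℂ) * (m.val : ℂ) / (M:ℂ)) *
        W (K*M) l (idx K M (m₁, k₁)) := by
    simp only [W, idx_val]
    rw [show Complex.exp (-2 * Real.pi * Complex.I * (l.val : ℂ) * (((k₁.val + K * (m₁+m : Fin M).val : ℕ)) : ℂ) / ((K*M : ℕ) : ℂ))
        = Complex.exp (-2 * Real.pi * Complex.I * (l.val : ℂ) * (m.val : ℂ) / (M:ℂ) +
            -2 * Real.pi * Complex.I * (l.val : ℂ) * (((k₁.val + K * m₁.val : ℕ)) : ℂ) / ((K*M : ℕ) : ℂ)) from by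
      rw [Complex.exp_eq_exp_iff_exists_int]
      refine ⟨(l.val * t : ℕ), ?_⟩
      push_cast
      rw [hv]
      field_simp
      ring]
    rw [Complex.exp_add]
    ring
  have h2 : ∀ mt : Fin M, (starRingEnd ℂ) (W M mt (m₁ + m)) * W M mt m
      = (starRingEnd ℂ) (W M mt m₁) * W M mt ⟨0, hM⟩ := by
    intro mt
    simp only [W, map_div₀, Complex.conj_ofReal, ← Complex.exp_conj, _root_.map_mul, map_neg,
      map_ofNat, Complex.conj_I, Complex.conj_natCast]
    rw [div_mul_div_comm, div_mul_div_comm, ← Complex.exp_add, ← Complex.exp_add]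
    rw [show (Complex.exp (-2 * Real.pi * -Complex.I * (mt.val:ℂ) * (((m₁+m : Fin M).val : ℕ):ℂ) / (M:ℂ) +
        -2 * Real.pi * Complex.I * (mt.val:ℂ) * (m.val:ℂ) / (M:ℂ)))
        = Complex.exp (-2 * Real.pi * -Complex.I * (mt.val:ℂ) * (m₁.val:ℂ) / (M:ℂ) +
            -2 * Real.pi * Complex.I * (mt.val:ℂ) * (((0:ℕ)):ℂ) / (M:ℂ)) from by
      rw [Complex.exp_eq_exp_iff_exists_int]
      refine ⟨-(mt.val * t : ℕ), ?_⟩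
      push_cast
      rw [hv]
      field_simp
      ring]
  rw [h1]
  rw [show (∑ mt : Fin M, (starRingEnd ℂ) (W M mt (m₁ + m)) * H k₁ mt * W M mt m)
      = ∑ mt : Fin M, (starRingEnd ℂ) (W M mt m₁) * H k₁ mt * W M mt ⟨0, hM⟩ from
    Finset.sum_congr rfl fun mt _ => by
      rw [show (starRingEnd ℂ) (W M mt (m₁ + m)) * H k₁ mt * W M mt m
          = ((starRingEnd ℂ) (W M mt (m₁ + m)) * W M mt m) * H k₁ mt from by ring, h2 mt]
      ring]
  ring

lemma kron_conjT {a b c d : ℕ} (A : Matrix (Fin a) (Fin b) ℂ) (B : Matrix (Fin c) (Fin d) ℂ) :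
    (A ⊗ₖ B)ᴴ = Aᴴ ⊗ₖ Bᴴ := by
  ext i j
  simp [Matrix.conjTranspose_apply, Matrix.kroneckerMap_apply, mul_comm]

set_option maxHeartbeats 1000000 in
lemma gfdm_inv_conjT (K M : ℕ) (hK : 0 < K) (hM : 0 < M) (G : Matrix (Fin K) (Fin M) ℂ)
    (h0 : ∀ (k : Fin K) (l : Fin M), G k l ≠ 0) :
    ((gfdmOfChar K M G)⁻¹)ᴴ
      = gfdmOfChar K M (fun k m => (starRingEnd ℂ) ((G k m)⁻¹)) := by
  set e := idx K M
  set U : Matrix (Fin M × Fin K) (Fin M × Fin K) ℂ := (W M)ᴴ ⊗ₖ (1 : Matrix (Fin K) (Fin K) ℂ) with hUdef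
  set V : Matrix (Fin M × Fin K) (Fin M × Fin K) ℂ := W M ⊗ₖ (W K)ᴴ with hVdef
  set Dg : Matrix (Fin M × Fin K) (Fin M × Fin K) ℂ :=
    Matrix.diagonal (fun p : Fin M × Fin K => G p.2 p.1) with hDdef
  set X : Matrix (Fin M × Fin K) (Fin M × Fin K) ℂ :=
    ((W M)ᴴ ⊗ₖ W K) * Matrix.diagonal (fun p : Fin M × Fin K => (G p.2 p.1)⁻¹) * (W M ⊗ₖ (1 : Matrix (Fin K) (Fin K) ℂ)) with hXdef
  have hUX : U * (W M ⊗ₖ (1 : Matrix (Fin K) (Fin K) ℂ)) = 1 := by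
    rw [hUdef, ← Matrix.mul_kronecker_mul, Wh_mul_W M hM, Matrix.one_mul, Matrix.one_kronecker_one]
  have hVX : V * ((W M)ᴴ ⊗ₖ W K) = 1 := by
    rw [hVdef, ← Matrix.mul_kronecker_mul, W_mul_Wh M hM, Wh_mul_W K hK, Matrix.one_kronecker_one]
  have hDX : Dg * Matrix.diagonal (fun p : Fin M × Fin K => (G p.2 p.1)⁻¹) = 1 := by
    rw [hDdef, Matrix.diagonal_mul_diagonal]
    rw [show (fun p : Fin M × Fin K => G p.2 p.1 * (G p.2 p.1)⁻¹) = fun _ => (1:ℂ) from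
      funext fun p => mul_inv_cancel₀ (h0 p.2 p.1), Matrix.diagonal_one]
  have hinner : (U * Dg * V) * (((W M)ᴴ ⊗ₖ W K) * Matrix.diagonal (fun p : Fin M × Fin K => (G p.2 p.1)⁻¹) * (W M ⊗ₖ (1 : Matrix (Fin K) (Fin K) ℂ))) = 1 := by
    calc (U * Dg * V) * (((W M)ᴴ ⊗ₖ W K) * Matrix.diagonal (fun p : Fin M × Fin K => (G p.2 p.1)⁻¹) * (W M ⊗ₖ (1 : Matrix (Fin K) (Fin K) ℂ)))
        = U * Dg * (V * ((W M)ᴴ ⊗ₖ W K)) * Matrix.diagonal (fun p : Fin M × Fin K => (G p.2 p.1)⁻¹) * (W M ⊗ₖ (1 : Matrix (Fin K) (Fin K) ℂ)) := by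
          simp only [Matrix.mul_assoc]
      _ = U * (Dg * Matrix.diagonal (fun p : Fin M × Fin K => (G p.2 p.1)⁻¹)) * (W M ⊗ₖ (1 : Matrix (Fin K) (Fin K) ℂ)) := by
          rw [hVX, Matrix.mul_one]; simp only [Matrix.mul_assoc]
      _ = U * (W M ⊗ₖ (1 : Matrix (Fin K) (Fin K) ℂ)) := by rw [hDX, Matrix.mul_one]
      _ = 1 := hUX
  have hinv : (gfdmOfChar K M G)⁻¹ = Matrix.reindex e e X := by
    apply Matrix.inv_eq_right_inv
    show Matrix.reindex e e (U * Dg * V) * Matrix.reindex e e X = 1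
    simp only [Matrix.reindex_apply]
    rw [Matrix.submatrix_mul_equiv, hXdef, hinner, Matrix.submatrix_one_equiv]
  rw [hinv]
  show (X.submatrix e.symm e.symm)ᴴ = _
  rw [Matrix.conjTranspose_submatrix]
  unfold gfdmOfChar
  rw [Matrix.reindex_apply]
  congr 1
  rw [hXdef]
  rw [Matrix.conjTranspose_mul, Matrix.conjTranspose_mul, kron_conjT, kron_conjT,
    Matrix.conjTranspose_one, Matrix.conjTranspose_conjTranspose, Matrix.diagonal_conjTranspose]
  rw [← Matrix.mul_assoc]
  rfl

theorem stmt19 (K M : ℕ) (hK : 0 < K) (hM : 0 < M) (G : Matrix (Fin K) (Fin M) ℂ)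
    (h0 : ∀ (k : Fin K) (l : Fin M), G k l ≠ 0)
    (c : Fin (K * M) → ℂ) (hc : ∀ l, c l ≠ 0) (N₀ : ℝ) (hN : 0 < N₀) :
    let A := gfdmOfChar K M G
    let Re := (N₀ : ℂ) •
      ((W (K * M) * (A⁻¹)ᴴ)ᴴ * (Matrix.diagonal c)⁻¹ * ((Matrix.diagonal c)⁻¹)ᴴ *
        (W (K * M) * (A⁻¹)ᴴ))
    ∀ (k : Fin K) (m m' : Fin M),
      Re (vecIdx k m) (vecIdx k m) = Re (vecIdx k m') (vecIdx k m') := by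
  intro A Re k m m'
  have hA : A = gfdmOfChar K M G := rfl
  have hRe : Re = (N₀ : ℂ) •
      ((W (K * M) * (A⁻¹)ᴴ)ᴴ * (Matrix.diagonal c)⁻¹ * ((Matrix.diagonal c)⁻¹)ᴴ *
        (W (K * M) * (A⁻¹)ᴴ)) := rfl
  have hDc : (Matrix.diagonal c)⁻¹ = Matrix.diagonal (fun l => (c l)⁻¹) := by
    apply Matrix.inv_eq_right_inv
    rw [Matrix.diagonal_mul_diagonal,
      show (fun l => c l * (c l)⁻¹) = fun _ => (1:ℂ) from funext fun l => mul_inv_cancel₀ (hc l),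
      Matrix.diagonal_one]
  have hinv : (A⁻¹)ᴴ = gfdmOfChar K M (fun k m => (starRingEnd ℂ) ((G k m)⁻¹)) := by
    rw [hA]; exact gfdm_inv_conjT K M hK hM G h0
  set B := W (K * M) * (A⁻¹)ᴴ with hB
  have hcol : ∀ (l : Fin (K*M)) (mm : Fin M), B l (vecIdx k mm)
      = Complex.exp (-2 * Real.pi * Complex.I * (l.val : ℂ) * (mm.val : ℂ) / (M:ℂ)) *
        B l (vecIdx k ⟨0, hM⟩) := by
    intro l mm
    rw [hB, hinv]
    exact col_phase K M hK hM _ l k mm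
  have entry : ∀ i, Re i i = (N₀ : ℂ) *
      ∑ l, (starRingEnd ℂ) (B l i) * (c l)⁻¹ * (starRingEnd ℂ) ((c l)⁻¹) * B l i := by
    intro i
    rw [hRe, Matrix.smul_apply, smul_eq_mul]
    congr 1
    rw [hDc, Matrix.diagonal_conjTranspose, Matrix.mul_apply]
    refine Finset.sum_congr rfl fun l _ => ?_
    rw [Matrix.mul_diagonal, Matrix.mul_diagonal, Matrix.conjTranspose_apply]
    rfl
  have key : ∀ mm : Fin M, Re (vecIdx k mm) (vecIdx k mm)
      = Re (vecIdx k ⟨0, hM⟩) (vecIdx k ⟨0, hM⟩) := by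
    intro mm
    rw [entry, entry]
    congr 1
    refine Finset.sum_congr rfl fun l _ => ?_
    rw [hcol l mm]
    set ph := Complex.exp (-2 * Real.pi * Complex.I * (l.val : ℂ) * (mm.val : ℂ) / (M:ℂ)) with hph
    have hph1 : (starRingEnd ℂ) ph * ph = 1 := by
      rw [hph, ← Complex.exp_conj, ← Complex.exp_add]
      rw [show (starRingEnd ℂ) (-2 * Real.pi * Complex.I * (l.val : ℂ) * (mm.val : ℂ) / (M:ℂ))
            + -2 * Real.pi * Complex.I * (l.val : ℂ) * (mm.val : ℂ) / (M:ℂ) = 0 from by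
        simp only [map_div₀, _root_.map_mul, map_neg, map_ofNat, Complex.conj_I,
          Complex.conj_ofReal, Complex.conj_natCast]
        ring]
      exact Complex.exp_zero
    rw [_root_.map_mul]
    calc (starRingEnd ℂ) ph * (starRingEnd ℂ) (B l (vecIdx k ⟨0, hM⟩)) * (c l)⁻¹ *
          (starRingEnd ℂ) ((c l)⁻¹) * (ph * B l (vecIdx k ⟨0, hM⟩))
        = ((starRingEnd ℂ) ph * ph) * ((starRingEnd ℂ) (B l (vecIdx k ⟨0, hM⟩)) * (c l)⁻¹ *
            (starRingEnd ℂ) ((c l)⁻¹) * B l (vecIdx k ⟨0, hM⟩)) := by ring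
      _ = _ := by rw [hph1, one_mul]
  rw [key m, key m']

end GFDM
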